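/- Let h be continuous and u₁, u₂ linearly independent solutions of u'' + h·u = 0 with Wronskian W = u₁'u₂ − u₁u₂' ≠ 0. Define on {(x,Φ): Φ>0, Φ² ≠ h(x)} the map X(x,Φ) = W^{−1}(Φ²u₁u₂ + u₁'u₂')/(Φ²u₁² + u₁'²), Y(x,Φ) = Φ/(Φ²u₁² + u₁'²). Then the Jacobian determinant of (X,Y) with respect to (x,Φ) equals (Φ² − h(x))/(Φ²u₁(x)² + u₁'(x)²)², which is nonzero whenever Φ² ≠ h(x). -/

import Mathlib

theorem stmt_17 (h u₁ u₂ : ℝ → ℝ) (W : ℝ) (hh : Continuous h)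
    (hu₁ : ∀ x : ℝ, DifferentiableAt ℝ u₁ x)
    (hu₁' : ∀ x : ℝ, DifferentiableAt ℝ (deriv u₁) x)
    (hu₂ : ∀ x : ℝ, DifferentiableAt ℝ u₂ x)
    (hu₂' : ∀ x : ℝ, DifferentiableAt ℝ (deriv u₂) x)
    (hode₁ : ∀ x : ℝ, deriv (deriv u₁) x + h x * u₁ x = 0)
    (hode₂ : ∀ x : ℝ, deriv (deriv u₂) x + h x * u₂ x = 0)
    (hW : ∀ x : ℝ, deriv u₁ x * u₂ x - u₁ x * deriv u₂ x = W)
    (hWne : W ≠ 0) :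
    let X : ℝ → ℝ → ℝ := fun x Φ =>
      W⁻¹ * (Φ ^ 2 * u₁ x * u₂ x + deriv u₁ x * deriv u₂ x)
        / (Φ ^ 2 * (u₁ x) ^ 2 + (deriv u₁ x) ^ 2)
    let Y : ℝ → ℝ → ℝ := fun x Φ => Φ / (Φ ^ 2 * (u₁ x) ^ 2 + (deriv u₁ x) ^ 2)
    ∀ x Φ : ℝ, 0 < Φ → Φ ^ 2 ≠ h x →
      deriv (fun t => X t Φ) x * deriv (fun s => Y x s) Φ
          - deriv (fun s => X x s) Φ * deriv (fun t => Y t Φ) x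
        = (Φ ^ 2 - h x) / (Φ ^ 2 * (u₁ x) ^ 2 + (deriv u₁ x) ^ 2) ^ 2 ∧
      (Φ ^ 2 - h x) / (Φ ^ 2 * (u₁ x) ^ 2 + (deriv u₁ x) ^ 2) ^ 2 ≠ 0 := by
  intro X Y x Φ hΦ hne
  have hΦ0 : Φ ≠ 0 := ne_of_gt hΦ
  have hWx : deriv u₁ x * u₂ x - u₁ x * deriv u₂ x ≠ 0 := by rw [hW x]; exact hWne
  have ha'' : deriv (deriv u₁) x = -(h x * u₁ x) := by linarith [hode₁ x]
  have hb'' : deriv (deriv u₂) x = -(h x * u₂ x) := by linarith [hode₂ x]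
  have hDne : Φ ^ 2 * (u₁ x) ^ 2 + (deriv u₁ x) ^ 2 ≠ 0 := by
    intro h0
    have hA : Φ ^ 2 * u₁ x ^ 2 = 0 :=
      le_antisymm (by nlinarith [sq_nonneg (deriv u₁ x)]) (by positivity)
    have hB : deriv u₁ x ^ 2 = 0 := by linarith
    have h2 : deriv u₁ x = 0 := by
      exact pow_eq_zero_iff two_ne_zero |>.mp hB
    have h1 : u₁ x = 0 := by
      rcases mul_eq_zero.mp hA with hc | hc
      · exact absurd (pow_eq_zero_iff two_ne_zero |>.mp hc) hΦ0
      · exact pow_eq_zero_iff two_ne_zero |>.mp hc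
    apply hWx; rw [h1, h2]; ring
  -- derivative of D in x
  have hDx : HasDerivAt (fun t => Φ ^ 2 * (u₁ t) ^ 2 + (deriv u₁ t) ^ 2)
      (2 * u₁ x * deriv u₁ x * (Φ ^ 2 - h x)) x := by
    have h1 := (((hu₁ x).hasDerivAt.pow 2).const_mul (Φ ^ 2)).add
      ((hu₁' x).hasDerivAt.pow 2)
    refine h1.congr_deriv ?_
    rw [ha'']; ring
  -- derivative of N in x
  have hNx : HasDerivAt (fun t => W⁻¹ * (Φ ^ 2 * u₁ t * u₂ t + deriv u₁ t * deriv u₂ t))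
      (W⁻¹ * ((Φ ^ 2 - h x) * (deriv u₁ x * u₂ x + u₁ x * deriv u₂ x))) x := by
    have h1 := ((((hasDerivAt_const x (Φ ^ 2)).mul (hu₁ x).hasDerivAt).mul
      (hu₂ x).hasDerivAt).add ((hu₁' x).hasDerivAt.mul (hu₂' x).hasDerivAt)).const_mul W⁻¹
    refine h1.congr_deriv ?_
    rw [ha'', hb'', Pi.mul_apply]; ring
  have hXx : deriv (fun t => X t Φ) x =
      (W⁻¹ * ((Φ ^ 2 - h x) * (deriv u₁ x * u₂ x + u₁ x * deriv u₂ x)) *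
        (Φ ^ 2 * (u₁ x) ^ 2 + (deriv u₁ x) ^ 2) -
       W⁻¹ * (Φ ^ 2 * u₁ x * u₂ x + deriv u₁ x * deriv u₂ x) *
        (2 * u₁ x * deriv u₁ x * (Φ ^ 2 - h x))) /
      (Φ ^ 2 * (u₁ x) ^ 2 + (deriv u₁ x) ^ 2) ^ 2 := by
    exact (hNx.div hDx hDne).deriv
  have hYx : deriv (fun t => Y t Φ) x =
      (0 * (Φ ^ 2 * (u₁ x) ^ 2 + (deriv u₁ x) ^ 2) -
        Φ * (2 * u₁ x * deriv u₁ x * (Φ ^ 2 - h x))) /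
      (Φ ^ 2 * (u₁ x) ^ 2 + (deriv u₁ x) ^ 2) ^ 2 := by
    exact ((hasDerivAt_const x Φ).div hDx hDne).deriv
  -- Φ-derivatives
  have hDΦ : HasDerivAt (fun s => s ^ 2 * (u₁ x) ^ 2 + (deriv u₁ x) ^ 2)
      (2 * Φ * (u₁ x) ^ 2) Φ := by
    have h1 := (((hasDerivAt_id Φ).pow 2).mul_const ((u₁ x) ^ 2)).add_const ((deriv u₁ x) ^ 2)
    refine h1.congr_deriv ?_
    simp only [id_eq]; ring
  have hNΦ : HasDerivAt (fun s => W⁻¹ * (s ^ 2 * u₁ x * u₂ x + deriv u₁ x * deriv u₂ x))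
      (W⁻¹ * (2 * Φ * u₁ x * u₂ x)) Φ := by
    have h1 := ((((hasDerivAt_id Φ).pow 2).mul_const (u₁ x)).mul_const (u₂ x)).add_const
      (deriv u₁ x * deriv u₂ x) |>.const_mul W⁻¹
    refine h1.congr_deriv ?_
    simp only [id_eq]; ring
  have hXΦ : deriv (fun s => X x s) Φ =
      (W⁻¹ * (2 * Φ * u₁ x * u₂ x) * (Φ ^ 2 * (u₁ x) ^ 2 + (deriv u₁ x) ^ 2) -
       W⁻¹ * (Φ ^ 2 * u₁ x * u₂ x + deriv u₁ x * deriv u₂ x) * (2 * Φ * (u₁ x) ^ 2)) /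
      (Φ ^ 2 * (u₁ x) ^ 2 + (deriv u₁ x) ^ 2) ^ 2 := by
    exact (hNΦ.div hDΦ hDne).deriv
  have hYΦ : deriv (fun s => Y x s) Φ =
      (1 * (Φ ^ 2 * (u₁ x) ^ 2 + (deriv u₁ x) ^ 2) - Φ * (2 * Φ * (u₁ x) ^ 2)) /
      (Φ ^ 2 * (u₁ x) ^ 2 + (deriv u₁ x) ^ 2) ^ 2 := by
    exact ((hasDerivAt_id Φ).div hDΦ hDne).deriv
  have hnum : Φ ^ 2 - h x ≠ 0 := sub_ne_zero.mpr hne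
  refine ⟨?_, div_ne_zero hnum (pow_ne_zero 2 hDne)⟩
  rw [hXx, hYΦ, hXΦ, hYx, ← hW x]
  field_simp
  rw [div_eq_div_iff (pow_ne_zero _ (by rw [mul_comm]; exact hDne)) (pow_ne_zero _ (by rw [mul_comm]; exact hDne))]
  ring
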